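/- Let G=(V,E) be a finite undirected graph. Then Q_orient(G) ⊆ P_WD-Subgraphs(G); that is, for every x ∈ ℝ^V for which there exists y with (x,y) ∈ P_orient(G), and for every subgraph G' = (V', E') of G, the inequality Σ_{u∈V'} (d_{G'}(u) − 1) x_u ≥ |E'| − |V'| holds. In particular, Q_orient(G) ⊆ P_WD(G). -/

import Mathlib

/- Common definitions for the polyhedral study of FVS / PFDS. -/

open scoped Classical
open Finset

namespace FVS

noncomputable section

variable {V : Type*}

/-- Degree of `u` in the subgraph of `G` induced on the vertex set `S`. -/
def degIn [Fintype V] (G : SimpleGraph V) (S : Finset V) (u : V) : ℕ :=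
  (S.filter fun v => G.Adj u v).card

/-- Number of edges of `G` with both endpoints in `S`, i.e. `|E[S]|`. -/
def edgesIn [Fintype V] (G : SimpleGraph V) (S : Finset V) : ℕ :=
  (G.edgeFinset.filter fun e => ∀ v ∈ e, v ∈ S).card

/-- A finite graph is a pseudoforest if each connected component has at most as many
edges as vertices. -/
def IsPseudoforest {W : Type*} [Fintype W] (H : SimpleGraph W) : Prop :=
  ∀ C : H.ConnectedComponent,
    (H.edgeFinset.filter fun e => ∀ v ∈ e, H.connectedComponentMk v = C).card ≤
      (Finset.univ.filter fun v => H.connectedComponentMk v = C).card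

/-- `U` is a pseudoforest deletion set for `G`: `G - U` is a pseudoforest. -/
def IsPFDS [Fintype V] (G : SimpleGraph V) (U : Finset V) : Prop :=
  IsPseudoforest (G.induce {v : V | v ∉ U})

/-- `F` is a feedback vertex set for `G`: `G - F` is acyclic. -/
def IsFVS [Fintype V] (G : SimpleGraph V) (F : Finset V) : Prop :=
  (G.induce {v : V | v ∉ F}).IsAcyclic

/-- Membership in the orientation polyhedron `P_orient(G)`: for every edge `e = uv`,
`x_u + x_v + y_{e,u} + y_{e,v} ≥ 1`; for every vertex `u`,
`x_u + Σ_{e ∈ δ(u)} y_{e,u} ≤ 1`; and all variables are nonnegative.  The variables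
`y e u` for pairs `(e, u)` where `e` is not an edge of `G` or `u` is not an endpoint
of `e` do not occur in the formulation and are pinned to `0`. -/
def POrient [Fintype V] (G : SimpleGraph V) (x : V → ℝ) (y : Sym2 V → V → ℝ) : Prop :=
  (∀ u v, G.Adj u v → 1 ≤ x u + x v + y s(u, v) u + y s(u, v) v) ∧
  (∀ u, x u + ∑ e ∈ G.edgeFinset.filter (fun e => u ∈ e), y e u ≤ 1) ∧
  (∀ u, 0 ≤ x u) ∧
  (∀ e u, 0 ≤ y e u) ∧
  (∀ e u, ¬ (e ∈ G.edgeSet ∧ u ∈ e) → y e u = 0)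

/-- Membership in `Q_orient(G)`, the projection of `P_orient(G)` to the `x`-variables. -/
def QOrient [Fintype V] (G : SimpleGraph V) (x : V → ℝ) : Prop :=
  ∃ y : Sym2 V → V → ℝ, POrient G x y

/-- Membership in the weak density polyhedron `P_WD(G)`:
`x ≥ 0` and `Σ_{u ∈ S} (d_S(u) - 1) x_u ≥ |E[S]| - |S|` for every `S ⊆ V`. -/
def PWD [Fintype V] (G : SimpleGraph V) (x : V → ℝ) : Prop :=
  (∀ u, 0 ≤ x u) ∧
  ∀ S : Finset V, (edgesIn G S : ℝ) - S.card ≤ ∑ u ∈ S, ((degIn G S u : ℝ) - 1) * x u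

/-- Membership in the strong density polyhedron `P_SD(G)`:
`x ≥ 0` and `Σ_{u ∈ S} (d_S(u) - 1) x_u ≥ |E[S]| - |S| + 1` whenever `E[S] ≠ ∅`. -/
def PSD [Fintype V] (G : SimpleGraph V) (x : V → ℝ) : Prop :=
  (∀ u, 0 ≤ x u) ∧
  ∀ S : Finset V, edgesIn G S ≠ 0 →
    (edgesIn G S : ℝ) - S.card + 1 ≤ ∑ u ∈ S, ((degIn G S u : ℝ) - 1) * x u

/-- The induced subgraph `G[U]` is a cycle: it is connected and `2`-regular. -/
def IsInducedCycle [Fintype V] (G : SimpleGraph V) (U : Finset V) : Prop :=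
  (G.induce (U : Set V)).Connected ∧ ∀ u ∈ U, degIn G U u = 2

/-- Membership in the cycle cover polyhedron `P_cycle-cover(G)`. -/
def PCycleCover [Fintype V] (G : SimpleGraph V) (x : V → ℝ) : Prop :=
  (∀ u, 0 ≤ x u) ∧ ∀ U : Finset V, IsInducedCycle G U → 1 ≤ ∑ u ∈ U, x u

/-- The induced subgraph `G[U]` is a `2`-pseudotree: connected with at least `|U| + 1` edges. -/
def Is2PseudotreeInduced [Fintype V] (G : SimpleGraph V) (U : Finset V) : Prop :=
  (G.induce (U : Set V)).Connected ∧ U.card + 1 ≤ edgesIn G U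

/-- Membership in the `2`-pseudotree cover polyhedron `P_2PT-cover(G)`. -/
def P2PTCover [Fintype V] (G : SimpleGraph V) (x : V → ℝ) : Prop :=
  (∀ u, 0 ≤ x u) ∧ ∀ U : Finset V, Is2PseudotreeInduced G U → 1 ≤ ∑ u ∈ U, x u

/-- `(x, y)` is an extreme point of `P_orient(G)`: it is feasible and is not a proper
convex combination of two distinct points of `P_orient(G)`. -/
def POrientExtreme [Fintype V] (G : SimpleGraph V) (x : V → ℝ) (y : Sym2 V → V → ℝ) : Prop :=
  POrient G x y ∧
    ∀ (x₁ x₂ : V → ℝ) (y₁ y₂ : Sym2 V → V → ℝ) (t : ℝ),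
      POrient G x₁ y₁ → POrient G x₂ y₂ → 0 < t → t < 1 →
      (∀ v, x v = t * x₁ v + (1 - t) * x₂ v) →
      (∀ e u, y e u = t * y₁ e u + (1 - t) * y₂ e u) →
      x₁ = x₂ ∧ y₁ = y₂

/-- `(x, y)` is a minimal point of `P_orient(G)`: decreasing any single coordinate by
any `ε > 0`, keeping the other coordinates unchanged, yields a point outside the
polyhedron. -/
def POrientMinimal [Fintype V] (G : SimpleGraph V) (x : V → ℝ) (y : Sym2 V → V → ℝ) : Prop :=
  (∀ v, ∀ ε : ℝ, 0 < ε → ¬ POrient G (Function.update x v (x v - ε)) y) ∧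
  (∀ e u, ∀ ε : ℝ, 0 < ε →
    ¬ POrient G x (fun e' u' => if e' = e ∧ u' = u then y e u - ε else y e' u'))

/-- `x` is an extreme point of `P_WD(G)`: it is feasible and is not a proper convex
combination of two distinct points of `P_WD(G)`. -/
def PWDExtreme [Fintype V] (G : SimpleGraph V) (x : V → ℝ) : Prop :=
  PWD G x ∧
    ∀ (x₁ x₂ : V → ℝ) (t : ℝ), PWD G x₁ → PWD G x₂ → 0 < t → t < 1 →
      (∀ v, x v = t * x₁ v + (1 - t) * x₂ v) → x₁ = x₂

/-- The support graph `H(y)`: the bipartite graph on `V(G) ⊕ E(G)` joining a vertex `v`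
to an edge `e` whenever `v` is an endpoint of the edge `e` of `G` and `y e v > 0`. -/
def supportGraph [Fintype V] (G : SimpleGraph V) (y : Sym2 V → V → ℝ) :
    SimpleGraph (V ⊕ Sym2 V) :=
  SimpleGraph.fromRel fun a b =>
    ∃ v e, a = Sum.inl v ∧ b = Sum.inr e ∧ e ∈ G.edgeSet ∧ v ∈ e ∧ 0 < y e v

/-- The edge `e` lies on some cycle of `G`. -/
def OnCycle (G : SimpleGraph V) (e : Sym2 V) : Prop :=
  ∃ (u : V) (w : G.Walk u u), w.IsCycle ∧ e ∈ w.edges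

/-- `G` has a semi-disjoint cycle: a cycle containing at most one vertex whose degree
in `G` is strictly larger than `2`. -/
def HasSemiDisjointCycle [Fintype V] (G : SimpleGraph V) : Prop :=
  ∃ (u : V) (w : G.Walk u u), w.IsCycle ∧
    (w.support.toFinset.filter fun v => 2 < G.degree v).card ≤ 1

/-- The set `δ(F, V - F)` of edges of `G` with exactly one endpoint in `F`. -/
def cutEdges [Fintype V] (G : SimpleGraph V) (F : Finset V) : Finset (Sym2 V) :=
  G.edgeFinset.filter fun e => ∃ u v, e = s(u, v) ∧ u ∈ F ∧ v ∉ F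

/-- The function `f_x(S) = |E[S]| - |S| - Σ_{u ∈ S} (d_S(u) - 1) x_u`. -/
def fWD [Fintype V] (G : SimpleGraph V) (x : V → ℝ) (S : Finset V) : ℝ :=
  (edgesIn G S : ℝ) - S.card - ∑ u ∈ S, ((degIn G S u : ℝ) - 1) * x u

/-- The row vector `row(S)` of the weak density constraint for the set `S`:
its coordinate at `u` is `d_S(u) - 1` if `u ∈ S` and `0` otherwise. -/
def rowWD [Fintype V] (G : SimpleGraph V) (S : Finset V) (u : V) : ℝ :=
  if u ∈ S then (degIn G S u : ℝ) - 1 else 0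

/-- The constraints (orientation), (load), (cumulative) and nonnegativity of the
purely orientation-based ILP formulation for FVS, with one copy `y f` of the
orientation variables for each edge `f` of `G`:
* `x_v + x_w + y^f_{e,v} + y^f_{e,w} ≥ 1` for all edges `e = vw` and all `f ∈ E`;
* `x_v + Σ_{e = vw ∈ E} y^f_{e,w} ≥ 1` for all `v ∈ V` and all `f ∈ E`;
* `Σ_{v ∈ V - {a,b}} x_v + Σ_{e = vw ∈ E - {f}} (y^f_{e,w} + y^f_{e,v}) ≤ |V| - 2`
  for all `f = ab ∈ E`; and all variables nonnegative. -/
def OrientSD [Fintype V] (G : SimpleGraph V) (x : V → ℝ)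
    (y : Sym2 V → Sym2 V → V → ℝ) : Prop :=
  (∀ f ∈ G.edgeSet, ∀ v w, G.Adj v w →
    1 ≤ x v + x w + y f s(v, w) v + y f s(v, w) w) ∧
  (∀ f ∈ G.edgeSet, ∀ v : V, 1 ≤ x v + ∑ w ∈ G.neighborFinset v, y f s(v, w) w) ∧
  (∀ a b : V, G.Adj a b →
    (∑ v ∈ Finset.univ \ {a, b}, x v) +
      (∑ e ∈ G.edgeFinset.erase s(a, b),
        ∑ u ∈ Finset.univ.filter (fun u => u ∈ e), y s(a, b) e u)
      ≤ (Fintype.card V : ℝ) - 2) ∧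
  (∀ u, 0 ≤ x u) ∧ (∀ f e u, 0 ≤ y f e u)

end
end FVS

namespace FVS

open Finset

private lemma core {V : Type*} [Fintype V] (G : SimpleGraph V) (x : V → ℝ)
    (y : Sym2 V → V → ℝ) (h : POrient G x y) (V' : Finset V) (E' : Finset (Sym2 V))
    (hE : E' ⊆ G.edgeFinset) (hend : ∀ e ∈ E', ∀ v ∈ e, v ∈ V') :
    (E'.card : ℝ) - V'.card ≤
      ∑ u ∈ V', (((E'.filter fun e => u ∈ e).card : ℝ) - 1) * x u := by
  obtain ⟨h1, h2, hx0, hy0, -⟩ := h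
  have key : ∀ e ∈ E', (1:ℝ) ≤ ∑ u ∈ V'.filter (· ∈ e), (x u + y e u) := by
    intro e he
    induction e using Sym2.ind with
    | _ a b =>
      have hab : G.Adj a b := G.mem_edgeSet.mp (SimpleGraph.mem_edgeFinset.mp (hE he))
      have hfe : V'.filter (· ∈ s(a,b)) = {a, b} := by
        ext v
        simp only [Finset.mem_filter, Sym2.mem_iff, Finset.mem_insert, Finset.mem_singleton]
        constructor
        · rintro ⟨-, h⟩; exact h
        · rintro (rfl | rfl)
          · exact ⟨hend _ he _ (by simp), Or.inl rfl⟩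
          · exact ⟨hend _ he _ (by simp), Or.inr rfl⟩
      rw [hfe, Finset.sum_pair hab.ne]
      have := h1 a b hab
      linarith
  have stepB : (E'.card : ℝ) ≤ ∑ e ∈ E', ∑ u ∈ V'.filter (· ∈ e), (x u + y e u) := by
    calc (E'.card : ℝ) = ∑ _e ∈ E', (1:ℝ) := by simp
    _ ≤ _ := Finset.sum_le_sum key
  have swap : ∑ e ∈ E', ∑ u ∈ V'.filter (· ∈ e), (x u + y e u)
      = ∑ u ∈ V', ∑ e ∈ E'.filter (fun e => u ∈ e), (x u + y e u) := by
    simp only [Finset.sum_filter]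
    exact Finset.sum_comm
  have stepD : ∀ u ∈ V', ∑ e ∈ E'.filter (fun e => u ∈ e), (x u + y e u)
      ≤ (((E'.filter fun e => u ∈ e).card : ℝ) - 1) * x u + 1 := by
    intro u _
    have hsub : E'.filter (fun e => u ∈ e) ⊆ G.edgeFinset.filter (fun e => u ∈ e) :=
      Finset.filter_subset_filter _ hE
    have hy : ∑ e ∈ E'.filter (fun e => u ∈ e), y e u
        ≤ ∑ e ∈ G.edgeFinset.filter (fun e => u ∈ e), y e u :=
      Finset.sum_le_sum_of_subset_of_nonneg hsub (fun e _ _ => hy0 e u)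
    have h2u := h2 u
    have : ∑ e ∈ E'.filter (fun e => u ∈ e), (x u + y e u)
        = ((E'.filter fun e => u ∈ e).card : ℝ) * x u
          + ∑ e ∈ E'.filter (fun e => u ∈ e), y e u := by
      rw [Finset.sum_add_distrib, Finset.sum_const, nsmul_eq_mul]
    rw [this]
    linarith
  have final : (E'.card : ℝ)
      ≤ ∑ u ∈ V', ((((E'.filter fun e => u ∈ e).card : ℝ) - 1) * x u + 1) := by
    calc (E'.card : ℝ) ≤ _ := stepB
    _ = _ := swap
    _ ≤ _ := Finset.sum_le_sum stepD
  rw [Finset.sum_add_distrib, Finset.sum_const, nsmul_eq_mul, mul_one] at final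
  linarith

private lemma filter_card_eq_degree {V : Type*} [Fintype V] (G' : SimpleGraph V) (u : V) :
    (G'.edgeFinset.filter fun e => u ∈ e).card = G'.degree u := by
  classical
  rw [← SimpleGraph.incidenceFinset_eq_filter, SimpleGraph.card_incidenceFinset_eq_degree]

/-- The restriction of `G` to edges with both endpoints in `S`, as a graph on `V`. -/
private def restr {V : Type*} (G : SimpleGraph V) (S : Finset V) : SimpleGraph V where
  Adj a b := G.Adj a b ∧ a ∈ S ∧ b ∈ S
  symm := ⟨fun _ _ ⟨h, ha, hb⟩ => ⟨h.symm, hb, ha⟩⟩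
  loopless := ⟨fun a ⟨h, _, _⟩ => G.loopless.irrefl a h⟩

end FVS

namespace FVS

/-- `Q_orient(G) ⊆ P_WD-Subgraphs(G)`; in particular
`Q_orient(G) ⊆ P_WD(G)`. -/
theorem stmt_1 {V : Type*} [Fintype V] (G : SimpleGraph V) (x : V → ℝ)
    (hx : QOrient G x) :
    (∀ H : G.Subgraph, (H.edgeSet.ncard : ℝ) - H.verts.ncard ≤
        ∑ u ∈ H.verts.toFinset, ((H.degree u : ℝ) - 1) * x u) ∧
    PWD G x := by
  obtain ⟨y, hp⟩ := hx
  have hx0 := hp.2.2.1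
  constructor
  · intro H
    classical
    set G' := H.spanningCoe with hG'
    have hedge : G'.edgeSet = H.edgeSet := by
      ext e
      induction e using Sym2.ind with
      | _ a b => rfl
    have hEcard : (H.edgeSet.ncard : ℝ) = (G'.edgeFinset.card : ℝ) := by
      rw [← hedge, Set.ncard_eq_toFinset_card']
      congr 2
    have hVcard : (H.verts.ncard : ℝ) = (H.verts.toFinset.card : ℝ) := by
      rw [Set.ncard_eq_toFinset_card']
    have hdeg : ∀ u, ((G'.edgeFinset.filter fun e => u ∈ e).card : ℝ) = (H.degree u : ℝ) := by
      intro u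
      rw [filter_card_eq_degree]
      norm_cast
      convert SimpleGraph.Subgraph.degree_spanningCoe (G' := H) u
    have hle := core G x y hp H.verts.toFinset G'.edgeFinset
      (SimpleGraph.edgeFinset_mono H.spanningCoe_le)
      (by
        intro e he v hv
        rw [Set.mem_toFinset]
        exact SimpleGraph.Subgraph.mem_verts_of_mem_edge
          (hedge ▸ SimpleGraph.mem_edgeFinset.mp he) hv)
    rw [hEcard, hVcard]
    refine hle.trans (le_of_eq (Finset.sum_congr rfl fun u _ => ?_))
    rw [hdeg]
  · refine ⟨hx0, fun S => ?_⟩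
    classical
    have hle : restr G S ≤ G := fun _ _ h => h.1
    have hedge : G.edgeFinset.filter (fun e => ∀ v ∈ e, v ∈ S) = (restr G S).edgeFinset := by
      ext e
      induction e using Sym2.ind with
      | _ a b =>
        simp only [Finset.mem_filter, SimpleGraph.mem_edgeFinset, SimpleGraph.mem_edgeSet]
        constructor
        · rintro ⟨hab, hall⟩
          exact ⟨hab, hall a (by simp), hall b (by simp)⟩
        · rintro ⟨hab, ha, hb⟩
          refine ⟨hab, fun v hv => ?_⟩
          rcases Sym2.mem_iff.mp hv with rfl | rfl
          · exact ha
          · exact hb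
    have hdeg : ∀ u ∈ S, degIn G S u = (restr G S).degree u := by
      intro u hu
      have : (restr G S).neighborFinset u = S.filter (fun v => G.Adj u v) := by
        ext v
        simp only [SimpleGraph.mem_neighborFinset, Finset.mem_filter]
        exact ⟨fun ⟨h, _, hv⟩ => ⟨hv, h⟩, fun ⟨hv, h⟩ => ⟨h, hu, hv⟩⟩
      rw [SimpleGraph.degree, this, degIn]
    have hle2 := core G x y hp S (restr G S).edgeFinset
      (SimpleGraph.edgeFinset_mono hle)
      (by
        intro e he v hv
        have : e ∈ G.edgeFinset.filter (fun e => ∀ v ∈ e, v ∈ S) := hedge ▸ he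
        exact (Finset.mem_filter.mp this).2 v hv)
    have hcard : (edgesIn G S : ℝ) = ((restr G S).edgeFinset.card : ℝ) := by
      rw [edgesIn, hedge]
    rw [hcard]
    refine hle2.trans (le_of_eq (Finset.sum_congr rfl fun u hu => ?_))
    rw [filter_card_eq_degree, ← hdeg u hu]


end FVS
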